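/- Let δ > 0, let a < b be real numbers, and let U be a differentiable function on (a,b) such that ξ ↦ U'(ξ)/√(1 + U'(ξ)²) is differentiable with derivative U(ξ), and such that (1/2)·U(ξ)² + 1/√(1 + U'(ξ)²) = 1 + δ for all ξ ∈ (a,b). Then b − a < √(2/δ). -/

import Mathlib

private lemma cap_aux (δ : ℝ) (hδ : 0 < δ) (a b : ℝ) (hab : a < b)
    (U U' : ℝ → ℝ)
    (hU : ∀ ξ ∈ Set.Ioo a b, HasDerivAt U (U' ξ) ξ)
    (hf : ∀ ξ ∈ Set.Ioo a b,
      HasDerivAt (fun ξ => U' ξ / Real.sqrt (1 + (U' ξ) ^ 2)) (U ξ) ξ)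
    (hint : ∀ ξ ∈ Set.Ioo a b,
      (1 / 2) * (U ξ) ^ 2 + 1 / Real.sqrt (1 + (U' ξ) ^ 2) = 1 + δ)
    (hpos : ∀ ξ ∈ Set.Ioo a b, 0 < U ξ) :
    b - a < Real.sqrt (2 / δ) := by
  set F : ℝ → ℝ := fun ξ => U' ξ / Real.sqrt (1 + (U' ξ) ^ 2) with hFdef
  set s : ℝ := Real.sqrt (2 * δ) with hsdef
  have hs : 0 < s := Real.sqrt_pos.2 (by linarith)
  have hs2 : s ^ 2 = 2 * δ := Real.sq_sqrt (by linarith)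
  -- |F| < 1
  have habs : ∀ ξ ∈ Set.Ioo a b, -1 < F ξ ∧ F ξ < 1 := by
    intro ξ _
    have h0 : (0:ℝ) < 1 + (U' ξ) ^ 2 := by positivity
    have h1 : (0:ℝ) < Real.sqrt (1 + (U' ξ) ^ 2) := Real.sqrt_pos.2 h0
    have h2 : |U' ξ| < Real.sqrt (1 + (U' ξ) ^ 2) :=
      (Real.lt_sqrt (abs_nonneg _)).2 (by nlinarith [sq_abs (U' ξ)])
    have h3 : |F ξ| < 1 := by
      rw [hFdef]
      simp only
      rw [abs_div, abs_of_nonneg (Real.sqrt_nonneg _)]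
      exact (div_lt_one h1).2 h2
    exact abs_lt.mp h3
  -- s ≤ U
  have hUge : ∀ ξ ∈ Set.Ioo a b, s ≤ U ξ := by
    intro ξ hξ
    have h0 : (0:ℝ) < 1 + (U' ξ) ^ 2 := by positivity
    have h1 : (1:ℝ) ≤ Real.sqrt (1 + (U' ξ) ^ 2) := by
      nlinarith [Real.sq_sqrt (show (0:ℝ) ≤ 1 + (U' ξ) ^ 2 by positivity),
        Real.sqrt_nonneg (1 + (U' ξ) ^ 2)]
    have h2 : 1 / Real.sqrt (1 + (U' ξ) ^ 2) ≤ 1 :=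
      div_le_one_of_le₀ h1 (by positivity)
    have h3 := hint ξ hξ
    have h4 : 2 * δ ≤ (U ξ) ^ 2 := by linarith
    nlinarith [hpos ξ hξ, hs]
  -- derivative of g := F - s * id
  have hg : ∀ ξ ∈ Set.Ioo a b, HasDerivAt (fun t => F t - s * t) (U ξ - s) ξ := by
    intro ξ hξ
    have := (hf ξ hξ).sub ((hasDerivAt_id ξ).const_mul s)
    rw [mul_one] at this; exact this
  have hmono : MonotoneOn (fun t => F t - s * t) (Set.Ioo a b) := by
    apply monotoneOn_of_deriv_nonneg (convex_Ioo a b)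
    · exact fun ξ hξ => (hg ξ hξ).continuousAt.continuousWithinAt
    · rw [interior_Ioo]
      exact fun ξ hξ => (hg ξ hξ).differentiableAt.differentiableWithinAt
    · rw [interior_Ioo]
      intro ξ hξ
      rw [(hg ξ hξ).deriv]
      have := hUge ξ hξ
      linarith
  have hgrow : ∀ x ∈ Set.Ioo a b, ∀ y ∈ Set.Ioo a b, x ≤ y →
      F x + s * (y - x) ≤ F y := by
    intro x hx y hy hxy
    have := hmono hx hy hxy
    simp only at this
    linarith [this]
  -- strict growth
  have hstrict : ∀ x ∈ Set.Ioo a b, ∀ y ∈ Set.Ioo a b, x < y →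
      F x + s * (y - x) < F y := by
    intro x hx y hy hxy
    rcases lt_or_eq_of_le (hgrow x hx y hy hxy.le) with h | heq
    · exact h
    · exfalso
      -- g constant on [x,y]
      have hgxy : F y - s * y = F x - s * x := by linarith
      have hsub : Set.Ioo x y ⊆ Set.Ioo a b := by
        intro t ht
        exact ⟨lt_trans hx.1 ht.1, lt_trans ht.2 hy.2⟩
      have hconst : ∀ t ∈ Set.Ioo x y, F t = (F x - s * x) + s * t := by
        intro t ht
        have h1 : F x - s * x ≤ F t - s * t := hmono hx (hsub ht) ht.1.le
        have h2 : F t - s * t ≤ F y - s * y := hmono (hsub ht) hy ht.2.le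
        rw [hgxy] at h2
        have : F t - s * t = F x - s * x := le_antisymm h2 h1
        linarith
      -- F has derivative s on (x,y), hence U = s there
      have hUeq : ∀ t ∈ Set.Ioo x y, U t = s := by
        intro t ht
        have hnb : Set.Ioo x y ∈ nhds t := isOpen_Ioo.mem_nhds ht
        have hev : F =ᶠ[nhds t] (fun ξ => (F x - s * x) + s * ξ) :=
          Filter.eventuallyEq_of_mem hnb (fun r hr => hconst r hr)
        have hlin : HasDerivAt (fun ξ => (F x - s * x) + s * ξ) s t := by
          have h := (hasDerivAt_const t (F x - s * x)).add ((hasDerivAt_id t).const_mul s)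
          rw [zero_add, mul_one] at h; exact h
        have hFt : HasDerivAt F s t := hlin.congr_of_eventuallyEq hev
        exact (hf t (hsub ht)).unique hFt
      -- then U' = 0 on (x,y), so F = 0 there
      have hFzero : ∀ t ∈ Set.Ioo x y, F t = 0 := by
        intro t ht
        have hnb : Set.Ioo x y ∈ nhds t := isOpen_Ioo.mem_nhds ht
        have hev : U =ᶠ[nhds t] (fun _ => s) :=
          Filter.eventuallyEq_of_mem hnb (fun r hr => hUeq r hr)
        have hU0 : HasDerivAt U 0 t :=
          (hasDerivAt_const t s).congr_of_eventuallyEq hev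
        have hU'0 : U' t = 0 := (hU t (hsub ht)).unique hU0
        rw [hFdef]
        simp [hU'0]
      -- contradiction: F linear nonconstant but zero at two points
      have ht1m : x + (y - x) / 3 ∈ Set.Ioo x y := ⟨by linarith, by linarith⟩
      have ht2m : x + 2 * (y - x) / 3 ∈ Set.Ioo x y := ⟨by linarith, by linarith⟩
      have e1 := hconst _ ht1m
      have e2 := hconst _ ht2m
      rw [hFzero _ ht1m] at e1
      rw [hFzero _ ht2m] at e2
      nlinarith [mul_pos hs (show (0:ℝ) < (y - x) / 3 by linarith)]
  -- s * √(2/δ) = 2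
  have hprod : s * Real.sqrt (2 / δ) = 2 := by
    rw [hsdef, ← Real.sqrt_mul (by linarith : (0:ℝ) ≤ 2 * δ)]
    rw [show 2 * δ * (2 / δ) = 4 by field_simp; ring]
    rw [show (4:ℝ) = 2 ^ 2 by norm_num, Real.sqrt_sq (by norm_num)]
  by_contra hL
  push_neg at hL
  have hL2 : 2 ≤ s * (b - a) := by
    calc (2:ℝ) = s * Real.sqrt (2 / δ) := hprod.symm
    _ ≤ s * (b - a) := mul_le_mul_of_nonneg_left hL hs.le
  set c : ℝ := (a + b) / 2 with hc
  have hcm : c ∈ Set.Ioo a b := ⟨by rw [hc]; linarith, by rw [hc]; linarith⟩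
  have hsbc : 1 ≤ s * (b - c) := by
    have : s * (b - c) = s * (b - a) / 2 := by rw [hc]; ring
    linarith
  have hsac : 1 ≤ s * (c - a) := by
    have : s * (c - a) = s * (b - a) / 2 := by rw [hc]; ring
    linarith
  rcases le_or_gt 0 (F c) with hFc | hFc
  · -- right side
    set c1 : ℝ := (c + b) / 2 with hc1
    have hc1m : c1 ∈ Set.Ioo a b :=
      ⟨by rw [hc1]; nlinarith [hcm.1, hcm.2], by rw [hc1]; nlinarith [hcm.2]⟩
    have hcc1 : c < c1 := by rw [hc1]; nlinarith [hcm.2]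
    have h1 : F c + s * (c1 - c) < F c1 := hstrict c hcm c1 hc1m hcc1
    have hF1lt : F c1 < 1 := (habs c1 hc1m).2
    have hygt : (0:ℝ) < (1 - F c1) / s := div_pos (by linarith) hs
    set y : ℝ := c1 + (1 - F c1) / s with hy
    have hylt : y < b := by
      rw [hy]
      have key : (1 - F c1) / s < b - c1 := by
        rw [div_lt_iff₀ hs]
        have hbc1 : s * (b - c1) = s * (b - c) - s * (c1 - c) := by ring
        nlinarith [hsbc]
      linarith
    have hym : y ∈ Set.Ioo a b := ⟨by rw [hy]; linarith [hc1m.1], hylt⟩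
    have h2 : F c1 + s * (y - c1) < F y :=
      hstrict c1 hc1m y hym (by rw [hy]; linarith)
    have hsy : s * (y - c1) = 1 - F c1 := by
      rw [hy]
      field_simp
      ring
    rw [hsy] at h2
    have := (habs y hym).2
    linarith
  · -- left side
    set c1 : ℝ := (a + c) / 2 with hc1
    have hc1m : c1 ∈ Set.Ioo a b :=
      ⟨by rw [hc1]; nlinarith [hcm.1], by rw [hc1]; nlinarith [hcm.1, hcm.2]⟩
    have hcc1 : c1 < c := by rw [hc1]; nlinarith [hcm.1]
    have h1 : F c1 + s * (c - c1) < F c := hstrict c1 hc1m c hcm hcc1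
    have hF1gt : -1 < F c1 := (habs c1 hc1m).1
    have hxgt : (0:ℝ) < (1 + F c1) / s := div_pos (by linarith) hs
    set x : ℝ := c1 - (1 + F c1) / s with hx
    have hxlt : a < x := by
      rw [hx]
      have key : (1 + F c1) / s < c1 - a := by
        rw [div_lt_iff₀ hs]
        have hac1 : s * (c1 - a) = s * (c - a) - s * (c - c1) := by ring
        nlinarith [hsac]
      linarith
    have hxm : x ∈ Set.Ioo a b := ⟨hxlt, by rw [hx]; linarith [hc1m.2]⟩
    have h2 : F x + s * (c1 - x) < F c1 :=
      hstrict x hxm c1 hc1m (by rw [hx]; linarith)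
    have hsx : s * (c1 - x) = 1 + F c1 := by
      rw [hx]
      field_simp
      ring
    rw [hsx] at h2
    have := (habs x hxm).1
    linarith

/-- Theorem 1 (length bound): a solution of the non-dimensional capillarity equation
with first-integral constant `c = 1 + δ`, `δ > 0`, on `(a,b)` forces `b - a < √(2/δ)`. -/
theorem stmt_4 (δ : ℝ) (hδ : 0 < δ) (a b : ℝ) (hab : a < b)
    (U U' : ℝ → ℝ)
    (hU : ∀ ξ ∈ Set.Ioo a b, HasDerivAt U (U' ξ) ξ)
    (hf : ∀ ξ ∈ Set.Ioo a b,
      HasDerivAt (fun ξ => U' ξ / Real.sqrt (1 + (U' ξ) ^ 2)) (U ξ) ξ)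
    (hint : ∀ ξ ∈ Set.Ioo a b,
      (1 / 2) * (U ξ) ^ 2 + 1 / Real.sqrt (1 + (U' ξ) ^ 2) = 1 + δ) :
    b - a < Real.sqrt (2 / δ) := by
  -- U never vanishes
  have hne : ∀ ξ ∈ Set.Ioo a b, U ξ ≠ 0 := by
    intro ξ hξ h0
    have h1 : (1:ℝ) ≤ Real.sqrt (1 + (U' ξ) ^ 2) := by
      nlinarith [Real.sq_sqrt (show (0:ℝ) ≤ 1 + (U' ξ) ^ 2 by positivity),
        Real.sqrt_nonneg (1 + (U' ξ) ^ 2)]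
    have h2 : 1 / Real.sqrt (1 + (U' ξ) ^ 2) ≤ 1 :=
      div_le_one_of_le₀ h1 (by positivity)
    have h3 := hint ξ hξ
    rw [h0] at h3
    nlinarith
  -- U continuous, interval connected: constant sign
  have hcont : ContinuousOn U (Set.Ioo a b) :=
    fun ξ hξ => (hU ξ hξ).continuousAt.continuousWithinAt
  set c : ℝ := (a + b) / 2 with hc
  have hcm : c ∈ Set.Ioo a b := ⟨by rw [hc]; linarith, by rw [hc]; linarith⟩
  have hivt : ∀ x ∈ Set.Ioo a b, ∀ y ∈ Set.Ioo a b, U x < 0 → 0 < U y → False := by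
    intro x hx y hy hxn hyp
    rcases lt_trichotomy x y with hxy | hxy | hxy
    · have hsub : Set.Icc x y ⊆ Set.Ioo a b := Set.Icc_subset_Ioo hx.1 hy.2
      have himg := intermediate_value_Icc hxy.le (hcont.mono hsub)
      obtain ⟨z, hz, hz0⟩ := himg ⟨hxn.le, hyp.le⟩
      exact hne z (hsub hz) hz0
    · rw [hxy] at hxn; linarith
    · have hsub : Set.Icc y x ⊆ Set.Ioo a b := Set.Icc_subset_Ioo hy.1 hx.2
      have himg := intermediate_value_Icc' hxy.le (hcont.mono hsub)
      obtain ⟨z, hz, hz0⟩ := himg ⟨hxn.le, hyp.le⟩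
      exact hne z (hsub hz) hz0
  have hsign : (∀ ξ ∈ Set.Ioo a b, 0 < U ξ) ∨ (∀ ξ ∈ Set.Ioo a b, U ξ < 0) := by
    rcases (hne c hcm).lt_or_gt with hneg | hposc
    · right
      intro ξ hξ
      rcases (hne ξ hξ).lt_or_gt with h | h
      · exact h
      · exact absurd (hivt c hcm ξ hξ hneg h) (fun f => f.elim)
    · left
      intro ξ hξ
      rcases (hne ξ hξ).lt_or_gt with h | h
      · exact absurd (hivt ξ hξ c hcm h hposc) (fun f => f.elim)
      · exact h
  rcases hsign with hp | hn
  · exact cap_aux δ hδ a b hab U U' hU hf hint hp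
  · -- reflect
    have := cap_aux δ hδ (-b) (-a) (by linarith)
      (fun ξ => -U (-ξ)) (fun ξ => U' (-ξ))
      (by
        intro ξ hξ
        have hm : -ξ ∈ Set.Ioo a b := ⟨by linarith [hξ.2], by linarith [hξ.1]⟩
        have := ((hU (-ξ) hm).comp ξ (hasDerivAt_neg ξ)).neg
        rw [show -(U' (-ξ) * -1) = U' (-ξ) by ring] at this; exact this)
      (by
        intro ξ hξ
        have hm : -ξ ∈ Set.Ioo a b := ⟨by linarith [hξ.2], by linarith [hξ.1]⟩
        have := (hf (-ξ) hm).comp ξ (hasDerivAt_neg ξ)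
        rw [show U (-ξ) * -1 = -U (-ξ) by ring] at this; exact this)
      (by
        intro ξ hξ
        have hm : -ξ ∈ Set.Ioo a b := ⟨by linarith [hξ.2], by linarith [hξ.1]⟩
        have := hint (-ξ) hm
        simpa using this)
      (by
        intro ξ hξ
        have hm : -ξ ∈ Set.Ioo a b := ⟨by linarith [hξ.2], by linarith [hξ.1]⟩
        have := hn (-ξ) hm
        exact neg_pos.2 this)
    linarith [this]
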